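/- arXiv:1904.06638 — 4 statements merged into one kernel-verified Lean document; each statement's English description precedes it below -/
import Mathlib

section
/- For elements α and β of the semigroup 𝐈ℕ∞, α 𝓓 β (α and β are Green's 𝓓-equivalent) if and only if dom α is a shift of dom β, i.e. there exists an integer k such that dom α = { n + k : n ∈ dom β } (equivalently, ran α is a shift of ran β). -/
/-- Partial transformations of the set ℕ of positive integers. -/
abbrev PMapN : Type := ℕ+ → Option ℕ+

/-- The domain of a partial transformation. -/
def pdom (f : PMapN) : Set ℕ+ := {n | f n ≠ none}

/-- The range of a partial transformation. -/
def pran (f : PMapN) : Set ℕ+ := {m | ∃ n, f n = some m}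

/-- Composition of partial transformations: `pmul f g` applies `g` first and then `f`. -/
def pmul (f g : PMapN) : PMapN := fun n => (g n).bind f

/-- The identity transformation 𝕀 of ℕ. -/
def pid : PMapN := fun n => some n

/-- `f` is a partial bijection (an injective partial map). -/
def IsPartialBij (f : PMapN) : Prop :=
  ∀ ⦃m n a⦄, f m = some a → f n = some a → m = n

/-- `f` is a partial isometry with respect to the metric `d(m, n) = |m - n|`. -/
def IsIsometry (f : PMapN) : Prop :=
  ∀ ⦃m n a b⦄, f m = some a → f n = some b →
    |((a : ℕ) : ℤ) - ((b : ℕ) : ℤ)| = |((m : ℕ) : ℤ) - ((n : ℕ) : ℤ)|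

/-- Membership in the inverse monoid `𝐈ℕ∞` of partial cofinite isometries of ℕ:
a partial bijection of ℕ with cofinite domain and cofinite range preserving distances. -/
def InIN (f : PMapN) : Prop :=
  IsPartialBij f ∧ (pdom f)ᶜ.Finite ∧ (pran f)ᶜ.Finite ∧ IsIsometry f

/-- Green's relation 𝓛 on the monoid `𝐈ℕ∞`. -/
def GreenL (a b : PMapN) : Prop :=
  (∃ u, InIN u ∧ pmul u a = b) ∧ (∃ v, InIN v ∧ pmul v b = a)

/-- Green's relation 𝓡 on the monoid `𝐈ℕ∞`. -/
def GreenR (a b : PMapN) : Prop :=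
  (∃ u, InIN u ∧ pmul a u = b) ∧ (∃ v, InIN v ∧ pmul b v = a)

/-- Green's relation 𝓓 is the relational composition `𝓛 ∘ 𝓡`. -/
def GreenD (a b : PMapN) : Prop := ∃ c, InIN c ∧ GreenL a c ∧ GreenR c b

/-- `A` is a shift of `B`: there is an integer `k` with `A = { n + k : n ∈ B }`
(as sets of integers). -/
def ShiftOf (A B : Set ℕ+) : Prop :=
  ∃ k : ℤ, ∀ x : ℤ,
    (∃ n ∈ A, x = ((n : ℕ) : ℤ)) ↔ (∃ m ∈ B, x = ((m : ℕ) : ℤ) + k)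

section Aux

lemma pnat_eq {a b : ℕ+} (h : ((a:ℕ):ℤ) = ((b:ℕ):ℤ)) : a = b := by
  have : (a:ℕ) = (b:ℕ) := by exact_mod_cast h
  exact PNat.coe_injective this

lemma pnat_pos (a : ℕ+) : 0 < ((a:ℕ):ℤ) := by exact_mod_cast a.pos

lemma finite_le (C : ℤ) : {x : ℕ+ | ((x:ℕ):ℤ) ≤ C}.Finite := by
  have hsub : {x : ℕ+ | ((x:ℕ):ℤ) ≤ C} ⊆ (fun x : ℕ+ => (x:ℕ)) ⁻¹' (Set.Iic C.toNat) := by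
    intro x hx
    simp only [Set.mem_preimage, Set.mem_Iic]
    have hx' : ((x:ℕ):ℤ) ≤ C := hx
    omega
  exact Set.Finite.subset
    ((Set.finite_Iic _).preimage (fun a _ b _ h => PNat.coe_injective h)) hsub

lemma bound_of_finite {S : Set ℕ+} (h : S.Finite) :
    ∃ M : ℤ, 0 ≤ M ∧ ∀ x ∈ S, ((x:ℕ):ℤ) ≤ M := by
  have h2 : ((fun x : ℕ+ => (x:ℕ)) '' S).Finite := h.image _
  obtain ⟨M, hM⟩ := h2.bddAbove
  refine ⟨(M:ℤ), Int.ofNat_nonneg M, fun x hx => ?_⟩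
  have := hM (Set.mem_image_of_mem _ hx)
  exact_mod_cast this

lemma exists_large {f : PMapN} (hf : InIN f) (N : ℤ) :
    ∃ n : ℕ+, n ∈ pdom f ∧ N < ((n:ℕ):ℤ) := by
  obtain ⟨M, hM0, hM⟩ := bound_of_finite hf.2.1
  obtain ⟨K, hK1, hK2⟩ : ∃ K : ℤ, M ≤ K ∧ N ≤ K :=
    ⟨max M N, le_max_left _ _, le_max_right _ _⟩
  refine ⟨⟨K.toNat + 1, Nat.succ_pos _⟩, ?_, ?_⟩
  · by_contra h
    have h2 : ((K.toNat + 1 : ℕ) : ℤ) ≤ M := hM _ h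
    omega
  · show N < ((K.toNat + 1 : ℕ) : ℤ)
    omega

lemma exists_shift {f : PMapN} (hf : InIN f) :
    ∃ k : ℤ, ∀ n a, f n = some a → ((a:ℕ):ℤ) = ((n:ℕ):ℤ) + k := by
  obtain ⟨n₀, hn₀, -⟩ := exists_large hf 0
  obtain ⟨a₀, ha₀⟩ := Option.ne_none_iff_exists'.mp hn₀
  refine ⟨((a₀:ℕ):ℤ) - ((n₀:ℕ):ℤ), fun n a hna => ?_⟩
  obtain ⟨p, hp, hpl⟩ :=
    exists_large hf (((n₀:ℕ):ℤ) + ((a₀:ℕ):ℤ) + ((n:ℕ):ℤ) + ((a:ℕ):ℤ))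
  obtain ⟨b, hb⟩ := Option.ne_none_iff_exists'.mp hp
  have h1 := hf.2.2.2 hb ha₀
  have h2 := hf.2.2.2 hb hna
  have pb := pnat_pos b
  have pa := pnat_pos a
  have pa₀ := pnat_pos a₀
  have pn := pnat_pos n
  have pn₀ := pnat_pos n₀
  have pp := pnat_pos p
  rcases abs_eq_abs.mp h1 with h1' | h1' <;> rcases abs_eq_abs.mp h2 with h2' | h2' <;> omega

open Classical in
noncomputable def shiftMap (A : Set ℕ+) (t : ℤ) : PMapN :=
  fun n => if h : n ∈ A ∧ 0 < ((n:ℕ):ℤ) + t then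
    some ⟨(((n:ℕ):ℤ) + t).toNat, by omega⟩ else none

lemma shiftMap_some {A : Set ℕ+} {t : ℤ} {n a : ℕ+} :
    shiftMap A t n = some a ↔ n ∈ A ∧ ((a:ℕ):ℤ) = ((n:ℕ):ℤ) + t := by
  unfold shiftMap
  by_cases h : n ∈ A ∧ 0 < ((n:ℕ):ℤ) + t
  · rw [dif_pos h]; refine (Option.some_inj (α := ℕ+)).trans ?_
    constructor
    · rintro rfl
      refine ⟨h.1, ?_⟩
      show (((((n:ℕ):ℤ) + t).toNat : ℕ) : ℤ) = ((n:ℕ):ℤ) + t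
      omega
    · rintro ⟨h1, h2⟩
      apply pnat_eq
      show (((((n:ℕ):ℤ) + t).toNat : ℕ) : ℤ) = ((a:ℕ):ℤ)
      omega
  · rw [dif_neg h]
    constructor
    · intro h'
      exact absurd h' (by simp)
    · rintro ⟨h1, h2⟩
      exact absurd ⟨h1, by have := pnat_pos a; omega⟩ h

lemma pdom_shiftMap {A : Set ℕ+} {t : ℤ}
    (hpos : ∀ n ∈ A, 0 < ((n:ℕ):ℤ) + t) :
    pdom (shiftMap A t) = A := by
  ext n
  constructor
  · intro h
    obtain ⟨a, ha⟩ := Option.ne_none_iff_exists'.mp h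
    exact (shiftMap_some.mp ha).1
  · intro h
    show shiftMap A t n ≠ none
    unfold shiftMap
    rw [dif_pos ⟨h, hpos n h⟩]
    simp

lemma mem_pran_shiftMap {A : Set ℕ+} {t : ℤ} {y : ℕ+} :
    y ∈ pran (shiftMap A t) ↔ ∃ n ∈ A, ((y:ℕ):ℤ) = ((n:ℕ):ℤ) + t := by
  constructor
  · rintro ⟨n, hn⟩
    exact ⟨n, (shiftMap_some.mp hn).1, (shiftMap_some.mp hn).2⟩
  · rintro ⟨n, hn, hy⟩
    exact ⟨n, shiftMap_some.mpr ⟨hn, hy⟩⟩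

lemma shiftMap_InIN {A : Set ℕ+} {t : ℤ} (hA : Aᶜ.Finite)
    (hpos : ∀ n ∈ A, 0 < ((n:ℕ):ℤ) + t) : InIN (shiftMap A t) := by
  refine ⟨?_, ?_, ?_, ?_⟩
  · intro m n a hm hn
    obtain ⟨_, hm2⟩ := shiftMap_some.mp hm
    obtain ⟨_, hn2⟩ := shiftMap_some.mp hn
    exact pnat_eq (by omega)
  · rw [pdom_shiftMap hpos]; exact hA
  · obtain ⟨M, hM0, hM⟩ := bound_of_finite hA
    apply Set.Finite.subset (finite_le (M + t + 1))
    intro y hy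
    show ((y:ℕ):ℤ) ≤ M + t + 1
    by_contra hylt
    push_neg at hylt
    have hpos' : 0 < ((y:ℕ):ℤ) - t := by have := pnat_pos y; omega
    refine hy (mem_pran_shiftMap.mpr ⟨⟨(((y:ℕ):ℤ) - t).toNat, by omega⟩, ?_, ?_⟩)
    · by_contra hna
      have h2 : (((((y:ℕ):ℤ) - t).toNat : ℕ) : ℤ) ≤ M := hM _ hna
      omega
    · show ((y:ℕ):ℤ) = (((((y:ℕ):ℤ) - t).toNat : ℕ) : ℤ) + t
      omega
  · intro m n a b hm hn
    obtain ⟨_, hm2⟩ := shiftMap_some.mp hm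
    obtain ⟨_, hn2⟩ := shiftMap_some.mp hn
    rw [hm2, hn2]
    congr 1
    ring

lemma pdom_pmul_subset (u a : PMapN) : pdom (pmul u a) ⊆ pdom a := by
  intro n hn hc
  apply hn
  show (a n).bind u = none
  rw [hc]
  rfl

lemma pran_pmul_subset (a u : PMapN) : pran (pmul a u) ⊆ pran a := by
  rintro m ⟨n, hn⟩
  have hn' : (u n).bind a = some m := hn
  obtain ⟨p, -, hp⟩ := Option.bind_eq_some_iff.mp hn'
  exact ⟨p, hp⟩

lemma left_mul_of_eq_dom {a c : PMapN} (ha : InIN a) (hc : InIN c)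
    (h : pdom a = pdom c) : ∃ u, InIN u ∧ pmul u a = c := by
  obtain ⟨s, hs⟩ := exists_shift ha
  obtain ⟨t, ht⟩ := exists_shift hc
  refine ⟨shiftMap (pran a) (t - s), ?_, ?_⟩
  · apply shiftMap_InIN ha.2.2.1
    rintro m ⟨n, hn⟩
    have h1 := hs n m hn
    have hna : n ∈ pdom a := by simp only [pdom, Set.mem_setOf_eq, hn]; simp
    have hnc : n ∈ pdom c := h ▸ hna
    obtain ⟨b, hb⟩ := Option.ne_none_iff_exists'.mp hnc
    have h2 := ht n b hb
    have := pnat_pos b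
    omega
  · funext n
    show (a n).bind _ = c n
    cases hn : a n with
    | none =>
      have hna : n ∉ pdom a := fun hh => hh hn
      have hnc : n ∉ pdom c := by rw [← h]; exact hna
      have hcn : c n = none := not_ne_iff.mp hnc
      rw [hcn]
      rfl
    | some m =>
      have hna : n ∈ pdom a := by simp only [pdom, Set.mem_setOf_eq, hn]; simp
      have hnc : n ∈ pdom c := h ▸ hna
      obtain ⟨b, hb⟩ := Option.ne_none_iff_exists'.mp hnc
      rw [hb]
      show shiftMap (pran a) (t - s) m = some b
      exact shiftMap_some.mpr ⟨⟨n, hn⟩, by have := hs n m hn; have := ht n b hb; omega⟩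

lemma greenL_of_eq_dom {a c : PMapN} (ha : InIN a) (hc : InIN c)
    (h : pdom a = pdom c) : GreenL a c :=
  ⟨left_mul_of_eq_dom ha hc h, left_mul_of_eq_dom hc ha h.symm⟩

lemma right_mul_of_eq_ran {a b : PMapN} (ha : InIN a) (hb : InIN b)
    (h : pran a = pran b) : ∃ u, InIN u ∧ pmul a u = b := by
  obtain ⟨s, hs⟩ := exists_shift ha
  obtain ⟨t, ht⟩ := exists_shift hb
  refine ⟨shiftMap (pdom b) (t - s), ?_, ?_⟩
  · apply shiftMap_InIN hb.2.1
    intro n hn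
    obtain ⟨m, hm⟩ := Option.ne_none_iff_exists'.mp hn
    have hma : m ∈ pran a := by rw [h]; exact ⟨n, hm⟩
    obtain ⟨p, hp⟩ := hma
    have h1 := hs p m hp
    have h2 := ht n m hm
    have := pnat_pos p
    omega
  · funext n
    show (shiftMap (pdom b) (t - s) n).bind a = b n
    by_cases hn : n ∈ pdom b
    · obtain ⟨m, hm⟩ := Option.ne_none_iff_exists'.mp hn
      have hma : m ∈ pran a := by rw [h]; exact ⟨n, hm⟩
      obtain ⟨p, hp⟩ := hma
      have h1 := hs p m hp
      have h2 := ht n m hm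
      have hsm : shiftMap (pdom b) (t - s) n = some p :=
        shiftMap_some.mpr ⟨hn, by omega⟩
      rw [hsm, hm]
      exact hp
    · have h1 : shiftMap (pdom b) (t - s) n = none := by
        by_contra hcc
        obtain ⟨y, hy⟩ := Option.ne_none_iff_exists'.mp hcc
        exact hn (shiftMap_some.mp hy).1
      rw [h1, not_ne_iff.mp hn]
      rfl

lemma greenR_of_eq_ran {a b : PMapN} (ha : InIN a) (hb : InIN b)
    (h : pran a = pran b) : GreenR a b :=
  ⟨right_mul_of_eq_ran ha hb h, right_mul_of_eq_ran hb ha h.symm⟩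

lemma greenL_dom {a c : PMapN} (h : GreenL a c) : pdom a = pdom c := by
  obtain ⟨⟨u, -, hu⟩, ⟨v, -, hv⟩⟩ := h
  apply Set.Subset.antisymm
  · rw [← hv]; exact pdom_pmul_subset v c
  · rw [← hu]; exact pdom_pmul_subset u a

lemma greenR_ran {c b : PMapN} (h : GreenR c b) : pran c = pran b := by
  obtain ⟨⟨u, -, hu⟩, ⟨v, -, hv⟩⟩ := h
  apply Set.Subset.antisymm
  · rw [← hv]; exact pran_pmul_subset b v
  · rw [← hu]; exact pran_pmul_subset c u

lemma ran_eq_dom_shift {f : PMapN} (k : ℤ)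
    (hk : ∀ n a, f n = some a → ((a:ℕ):ℤ) = ((n:ℕ):ℤ) + k) (x : ℤ) :
    (∃ m ∈ pran f, x = ((m:ℕ):ℤ)) ↔ (∃ n ∈ pdom f, x = ((n:ℕ):ℤ) + k) := by
  constructor
  · rintro ⟨m, ⟨n, hn⟩, rfl⟩
    refine ⟨n, ?_, by rw [hk n m hn]⟩
    simp only [pdom, Set.mem_setOf_eq, hn]
    simp
  · rintro ⟨n, hn, rfl⟩
    obtain ⟨a, ha⟩ := Option.ne_none_iff_exists'.mp hn
    exact ⟨a, ⟨n, ha⟩, (hk n a ha).symm⟩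

lemma shiftOf_ran_dom {f : PMapN} (k : ℤ)
    (hk : ∀ n a, f n = some a → ((a:ℕ):ℤ) = ((n:ℕ):ℤ) + k) :
    ShiftOf (pran f) (pdom f) :=
  ⟨k, ran_eq_dom_shift k hk⟩

lemma shiftOf_symm {A B : Set ℕ+} (h : ShiftOf A B) : ShiftOf B A := by
  obtain ⟨k, hk⟩ := h
  refine ⟨-k, fun x => ?_⟩
  constructor
  · rintro ⟨n, hn, rfl⟩
    obtain ⟨a, ha, he⟩ := (hk (((n:ℕ):ℤ) + k)).mpr ⟨n, hn, rfl⟩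
    exact ⟨a, ha, by omega⟩
  · rintro ⟨m, hm, rfl⟩
    obtain ⟨b, hb, he⟩ := (hk ((m:ℕ):ℤ)).mp ⟨m, hm, rfl⟩
    exact ⟨b, hb, by omega⟩

lemma shiftOf_trans {A B C : Set ℕ+} (h1 : ShiftOf A B) (h2 : ShiftOf B C) :
    ShiftOf A C := by
  obtain ⟨k, hk⟩ := h1
  obtain ⟨l, hl⟩ := h2
  refine ⟨l + k, fun x => ?_⟩
  rw [hk x]
  constructor
  · rintro ⟨m, hm, rfl⟩
    obtain ⟨c, hc, he⟩ := (hl ((m:ℕ):ℤ)).mp ⟨m, hm, rfl⟩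
    exact ⟨c, hc, by omega⟩
  · rintro ⟨c, hc, rfl⟩
    obtain ⟨m, hm, he⟩ := (hl (((c:ℕ):ℤ) + l)).mpr ⟨c, hc, rfl⟩
    exact ⟨m, hm, by omega⟩

end Aux

/-- For `α, β ∈ 𝐈ℕ∞`, `α 𝓓 β` if and only if `dom α` is a shift of
`dom β` (equivalently, if and only if `ran α` is a shift of `ran β`). -/
theorem stmt8 (α β : PMapN) (hα : InIN α) (hβ : InIN β) :
    (GreenD α β ↔ ShiftOf (pdom α) (pdom β)) ∧
    (GreenD α β ↔ ShiftOf (pran α) (pran β)) := by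
  obtain ⟨kα, hkα⟩ := exists_shift hα
  obtain ⟨kβ, hkβ⟩ := exists_shift hβ
  have main : GreenD α β ↔ ShiftOf (pdom α) (pdom β) := by
    constructor
    · rintro ⟨c, hc, hL, hR⟩
      obtain ⟨kc, hkc⟩ := exists_shift hc
      have hd : pdom α = pdom c := greenL_dom hL
      have hr : pran c = pran β := greenR_ran hR
      refine ⟨kβ - kc, fun x => ?_⟩
      constructor
      · rintro ⟨n, hn, rfl⟩
        have hn' : n ∈ pdom c := hd ▸ hn
        obtain ⟨a, ha⟩ := Option.ne_none_iff_exists'.mp hn'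
        have haβ : a ∈ pran β := hr ▸ ⟨n, ha⟩
        obtain ⟨m, hm⟩ := haβ
        have hmd : m ∈ pdom β := by
          simp only [pdom, Set.mem_setOf_eq, hm]; simp
        have e1 := hkc n a ha
        have e2 := hkβ m a hm
        exact ⟨m, hmd, by omega⟩
      · rintro ⟨m, hm, rfl⟩
        obtain ⟨a, ha⟩ := Option.ne_none_iff_exists'.mp hm
        have haC : a ∈ pran c := by rw [hr]; exact ⟨m, ha⟩
        obtain ⟨n, hn⟩ := haC
        have hnd : n ∈ pdom α := by
          rw [hd]
          simp only [pdom, Set.mem_setOf_eq, hn]; simp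
        have e1 := hkc n a hn
        have e2 := hkβ m a ha
        exact ⟨n, hnd, by omega⟩
    · rintro ⟨k, hk⟩
      have hpos : ∀ n ∈ pdom α, 0 < ((n:ℕ):ℤ) + (kβ - k) := by
        intro n hn
        obtain ⟨m, hm, he⟩ := (hk ((n:ℕ):ℤ)).mp ⟨n, hn, rfl⟩
        obtain ⟨b, hb⟩ := Option.ne_none_iff_exists'.mp hm
        have e := hkβ m b hb
        have := pnat_pos b
        omega
      have hcIN : InIN (shiftMap (pdom α) (kβ - k)) := shiftMap_InIN hα.2.1 hpos
      have hran : pran (shiftMap (pdom α) (kβ - k)) = pran β := by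
        ext y
        rw [mem_pran_shiftMap]
        constructor
        · rintro ⟨n, hn, hy⟩
          obtain ⟨m, hm, he⟩ := (hk ((n:ℕ):ℤ)).mp ⟨n, hn, rfl⟩
          obtain ⟨b, hb⟩ := Option.ne_none_iff_exists'.mp hm
          have e := hkβ m b hb
          have hyb : y = b := pnat_eq (by omega)
          exact hyb ▸ ⟨m, hb⟩
        · rintro ⟨m, hm⟩
          have hmd : m ∈ pdom β := by
            simp only [pdom, Set.mem_setOf_eq, hm]; simp
          have e := hkβ m y hm
          obtain ⟨n, hn, he⟩ := (hk (((m:ℕ):ℤ) + k)).mpr ⟨m, hmd, rfl⟩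
          exact ⟨n, hn, by omega⟩
      exact ⟨_, hcIN, greenL_of_eq_dom hα hcIN (pdom_shiftMap hpos).symm,
        greenR_of_eq_ran hcIN hβ hran⟩
  have hdr : ShiftOf (pdom α) (pdom β) ↔ ShiftOf (pran α) (pran β) := by
    constructor
    · intro h
      exact shiftOf_trans (shiftOf_trans (shiftOf_ran_dom kα hkα) h)
        (shiftOf_symm (shiftOf_ran_dom kβ hkβ))
    · intro h
      exact shiftOf_trans (shiftOf_trans (shiftOf_symm (shiftOf_ran_dom kα hkα)) h)
        (shiftOf_ran_dom kβ hkβ)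
  exact ⟨main, main.trans hdr⟩
end

section
/- The map 𝔉 : 𝐈ℕ∞ → ℤ assigning to each α the unique integer z_α with α(n) = n + z_α for all n ∈ dom α is a surjective monoid homomorphism to the additive group of integers, and 𝔉(α) = 𝔉(β) if and only if α 𝔠_mg β; consequently the quotient 𝐈ℕ∞/𝔠_mg of 𝐈ℕ∞ by its least group congruence is isomorphic to (ℤ, +). -/
/-- The least group congruence `𝔠_mg` on the inverse semigroup `𝐈ℕ∞`:
`a 𝔠_mg b` iff `ea = eb` for some idempotent `e ∈ 𝐈ℕ∞`. -/
def Cmg (a b : PMapN) : Prop :=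
  ∃ e, InIN e ∧ pmul e e = e ∧ pmul e a = pmul e b

/- ### Auxiliary material -/

open Classical in
/-- The index of a partial cofinite isometry, by classical choice of a domain point. -/
noncomputable def Fz (f : PMapN) : ℤ :=
  if h : ∃ p : ℕ+ × ℕ+, f p.1 = some p.2 then
    ((h.choose.2 : ℕ) : ℤ) - ((h.choose.1 : ℕ) : ℤ)
  else 0

lemma dom_infinite {f : PMapN} (hf : (pdom f)ᶜ.Finite) : (pdom f).Infinite := by
  simpa using hf.infinite_compl

lemma exists_dom {f : PMapN} (hf : (pdom f)ᶜ.Finite) : ∃ n a, f n = some a := by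
  obtain ⟨n, hn⟩ := (dom_infinite hf).nonempty
  obtain ⟨a, ha⟩ := Option.ne_none_iff_exists'.mp hn
  exact ⟨n, a, ha⟩

/-- Any element of `𝐈ℕ∞` is a restriction of a translation. -/
lemma key {f : PMapN} (hf : InIN f) {m n : ℕ+} {a b : ℕ+}
    (hm : f m = some a) (hn : f n = some b) :
    ((a : ℕ) : ℤ) - ((m : ℕ) : ℤ) = ((b : ℕ) : ℤ) - ((n : ℕ) : ℤ) := by
  obtain ⟨inj, hdom, -, iso⟩ := hf
  by_cases hmn : m = n
  · subst hmn
    rw [hm] at hn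
    rw [Option.some_inj.mp hn]
  · by_contra hne
    obtain ⟨k, hk, hkgt⟩ := (dom_infinite hdom).exists_gt (a + m + b + n)
    obtain ⟨c, hc⟩ := Option.ne_none_iff_exists'.mp hk
    have h1 := iso hm hn
    have h2 := iso hc hm
    have h3 := iso hc hn
    rw [abs_eq_abs] at h1 h2 h3
    have hkN : ((a + m + b + n : ℕ+) : ℕ) < (k : ℕ) := hkgt
    have hsum : ((a + m + b + n : ℕ+) : ℕ) = (a:ℕ) + m + b + n := by
      simp [PNat.add_coe]
    have hc1 : 0 < (c : ℕ) := c.2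
    have hmn' : (m : ℕ) ≠ (n : ℕ) := fun h => hmn (PNat.coe_injective h)
    rcases h1 with h1 | h1 <;> rcases h2 with h2 | h2 <;> rcases h3 with h3 | h3 <;> omega

lemma Fz_eq {f : PMapN} {w : ℤ} {n a : ℕ+} (hna : f n = some a)
    (hconst : ∀ m b : ℕ+, f m = some b → ((b : ℕ) : ℤ) - ((m : ℕ) : ℤ) = w) :
    Fz f = w := by
  have h : ∃ p : ℕ+ × ℕ+, f p.1 = some p.2 := ⟨(n, a), hna⟩
  rw [Fz, dif_pos h]
  exact hconst _ _ h.choose_spec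

lemma Fz_spec {f : PMapN} (hf : InIN f) {n a : ℕ+} (hna : f n = some a) :
    Fz f = ((a : ℕ) : ℤ) - ((n : ℕ) : ℤ) :=
  Fz_eq hna (fun _ _ hb => key hf hb hna)

lemma finite_le_s13 (t : ℤ) : {m : ℕ+ | ((m : ℕ) : ℤ) ≤ t}.Finite := by
  apply Set.Finite.subset (Set.finite_Iic (⟨t.toNat + 1, Nat.succ_pos _⟩ : ℕ+))
  intro m hm
  have hm' : ((m : ℕ) : ℤ) ≤ t := hm
  rw [Set.mem_Iic]
  show (m : ℕ) ≤ t.toNat + 1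
  omega

/-- The translation by `z`, as a partial map of `ℕ+`. -/
noncomputable def shiftZ (z : ℤ) : PMapN := fun n =>
  if h : 0 < ((n : ℕ) : ℤ) + z then some ⟨(((n : ℕ) : ℤ) + z).toNat, by omega⟩ else none

lemma shiftZ_eq_some {z : ℤ} {n a : ℕ+} :
    shiftZ z n = some a ↔ ((a : ℕ) : ℤ) = ((n : ℕ) : ℤ) + z := by
  constructor
  · intro h
    rw [shiftZ] at h
    split at h
    · rename_i hpos
      rcases Option.some_inj.mp h with rfl
      show (((((n : ℕ) : ℤ) + z).toNat : ℕ) : ℤ) = ((n : ℕ) : ℤ) + z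
      omega
    · exact absurd h (by simp)
  · intro h
    have hpos : 0 < ((n : ℕ) : ℤ) + z := by rw [← h]; exact_mod_cast a.2
    rw [shiftZ, dif_pos hpos]
    congr 1
    apply PNat.coe_injective
    show (((n : ℕ) : ℤ) + z).toNat = (a : ℕ)
    omega

lemma shiftZ_InIN (z : ℤ) : InIN (shiftZ z) := by
  refine ⟨?_, ?_, ?_, ?_⟩
  · intro m n a hm hn
    rw [shiftZ_eq_some] at hm hn
    apply PNat.coe_injective
    omega
  · apply (finite_le_s13 (-z)).subset
    intro n hn
    simp only [pdom, Set.mem_compl_iff, Set.mem_setOf_eq, not_not] at hn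
    show ((n : ℕ) : ℤ) ≤ -z
    by_contra hc
    have hpos : 0 < ((n : ℕ) : ℤ) + z := by omega
    rw [shiftZ, dif_pos hpos] at hn
    exact absurd hn (by simp)
  · apply (finite_le_s13 z).subset
    intro m hm
    simp only [pran, Set.mem_compl_iff, Set.mem_setOf_eq] at hm
    show ((m : ℕ) : ℤ) ≤ z
    by_contra hc
    push_neg at hc
    have hpos : 0 < ((m : ℕ) : ℤ) - z := by omega
    refine hm ⟨⟨(((m : ℕ) : ℤ) - z).toNat, by omega⟩, ?_⟩
    refine shiftZ_eq_some.mpr ?_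
    show ((m : ℕ) : ℤ) = ((((m : ℕ) : ℤ) - z).toNat : ℤ) + z
    omega
  · intro m n a b hm hn
    rw [shiftZ_eq_some] at hm hn
    rw [hm, hn]
    ring_nf

lemma shiftZ_Fz (z : ℤ) : Fz (shiftZ z) = z := by
  obtain ⟨n, a, hna⟩ := exists_dom (shiftZ_InIN z).2.1
  rw [Fz_spec (shiftZ_InIN z) hna]
  have := shiftZ_eq_some.mp hna
  omega

open Classical in
/-- The partial identity on a set `S`. -/
noncomputable def restrId (S : Set ℕ+) : PMapN := fun m => if m ∈ S then some m else none

open Classical in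
lemma restrId_eq_some {S : Set ℕ+} {m x : ℕ+} :
    restrId S m = some x ↔ m ∈ S ∧ x = m := by
  rw [restrId]
  split <;> simp_all [eq_comm]

lemma restrId_idem (S : Set ℕ+) : pmul (restrId S) (restrId S) = restrId S := by
  funext m
  rcases h : restrId S m with - | x
  · simp [pmul, h]
  · obtain ⟨hm, rfl⟩ := restrId_eq_some.mp h
    simp [pmul, h]

lemma restrId_InIN {S : Set ℕ+} (hS : Sᶜ.Finite) : InIN (restrId S) := by
  have hdom : pdom (restrId S) = S := by
    ext m
    simp only [pdom, Set.mem_setOf_eq]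
    constructor
    · intro h
      obtain ⟨x, hx⟩ := Option.ne_none_iff_exists'.mp h
      exact (restrId_eq_some.mp hx).1
    · intro h
      rw [restrId, if_pos h]
      simp
  have hran : pran (restrId S) = S := by
    ext m
    simp only [pran, Set.mem_setOf_eq]
    constructor
    · rintro ⟨n, hn⟩
      obtain ⟨hmem, rfl⟩ := restrId_eq_some.mp hn
      exact hmem
    · intro h
      exact ⟨m, restrId_eq_some.mpr ⟨h, rfl⟩⟩
  refine ⟨?_, ?_, ?_, ?_⟩
  · intro m n a hm hn
    obtain ⟨-, rfl⟩ := restrId_eq_some.mp hm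
    obtain ⟨-, h2⟩ := restrId_eq_some.mp hn
    exact h2
  · rwa [hdom]
  · rwa [hran]
  · intro m n a b hm hn
    obtain ⟨-, rfl⟩ := restrId_eq_some.mp hm
    obtain ⟨-, rfl⟩ := restrId_eq_some.mp hn
    rfl

lemma pmul_exists {f g : PMapN} (hf : InIN f) (hg : InIN g) :
    ∃ n b c, g n = some b ∧ f b = some c := by
  have hB : {n : ℕ+ | ∃ b, g n = some b ∧ f b = none}.Finite := by
    have himg : ((fun n => (g n).getD 1) ''
        {n : ℕ+ | ∃ b, g n = some b ∧ f b = none}).Finite := by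
      apply hf.2.1.subset
      rintro x ⟨n, ⟨b, hb, hfb⟩, rfl⟩
      simp only [hb, Option.getD_some]
      simpa [pdom] using hfb
    apply Set.Finite.of_finite_image himg
    rintro n₁ ⟨b₁, h₁, -⟩ n₂ ⟨b₂, h₂, -⟩ hφ
    simp only [h₁, h₂, Option.getD_some] at hφ
    subst hφ
    exact hg.1 h₁ h₂
  have hU : ((pdom g)ᶜ ∪ {n : ℕ+ | ∃ b, g n = some b ∧ f b = none}).Finite :=
    hg.2.1.union hB
  obtain ⟨n, hn⟩ := hU.infinite_compl.nonempty
  rw [Set.mem_compl_iff, Set.mem_union, not_or] at hn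
  obtain ⟨h1, h2⟩ := hn
  rw [Set.notMem_compl_iff] at h1
  obtain ⟨b, hb⟩ := Option.ne_none_iff_exists'.mp h1
  have hfb : f b ≠ none := fun hc => h2 ⟨b, hb, hc⟩
  obtain ⟨c, hc⟩ := Option.ne_none_iff_exists'.mp hfb
  exact ⟨n, b, c, hb, hc⟩

lemma Fz_mul {f g : PMapN} (hf : InIN f) (hg : InIN g) :
    Fz (pmul f g) = Fz f + Fz g := by
  obtain ⟨n, b, c, hb, hc⟩ := pmul_exists hf hg
  have hnc : pmul f g n = some c := by simp [pmul, hb, hc]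
  apply Fz_eq hnc
  intro m d hmd
  rw [pmul] at hmd
  obtain ⟨b', hb', hd⟩ := Option.bind_eq_some_iff.mp hmd
  have e1 := Fz_spec hg hb'
  have e2 := Fz_spec hf hd
  linarith

lemma cmg_of_eq {f g : PMapN} (hf : InIN f) (hg : InIN g) (hFz : Fz f = Fz g) :
    Cmg f g := by
  have hagree : ∀ n a b : ℕ+, f n = some a → g n = some b → a = b := by
    intro n a b ha hb
    have e1 := Fz_spec hf ha
    have e2 := Fz_spec hg hb
    apply PNat.coe_injective
    have : ((a : ℕ) : ℤ) = ((b : ℕ) : ℤ) := by linarith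
    exact_mod_cast this
  have hSc : {m : ℕ+ | ∃ n, f n = some m ∧ g n = some m}ᶜ.Finite := by
    apply Set.Finite.subset (Set.Finite.union (finite_le_s13 (Fz f))
      (Set.Finite.image (fun n : ℕ+ => (((n : ℕ) : ℤ) + Fz f).toNat.toPNat')
        (hf.2.1.union hg.2.1)))
    intro m hm
    by_cases hle : ((m : ℕ) : ℤ) ≤ Fz f
    · exact Or.inl hle
    · right
      push_neg at hle
      have hpos : 0 < ((m : ℕ) : ℤ) - Fz f := by omega
      obtain ⟨n0, hn0⟩ : ∃ n0 : ℕ+, ((n0 : ℕ) : ℤ) = ((m : ℕ) : ℤ) - Fz f := by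
        refine ⟨⟨(((m : ℕ) : ℤ) - Fz f).toNat, by omega⟩, ?_⟩
        show (((((m : ℕ) : ℤ) - Fz f).toNat : ℕ) : ℤ) = ((m : ℕ) : ℤ) - Fz f
        omega
      refine ⟨n0, ?_, ?_⟩
      · by_contra hcon
        rw [Set.mem_union, not_or] at hcon
        obtain ⟨h1, h2⟩ := hcon
        rw [Set.notMem_compl_iff] at h1 h2
        obtain ⟨a, ha⟩ := Option.ne_none_iff_exists'.mp h1
        obtain ⟨b, hb⟩ := Option.ne_none_iff_exists'.mp h2
        obtain rfl := hagree _ a b ha hb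
        have e1 := Fz_spec hf ha
        have ham : a = m := by
          apply PNat.coe_injective
          have : ((a : ℕ) : ℤ) = ((m : ℕ) : ℤ) := by linarith
          exact_mod_cast this
        subst ham
        exact hm ⟨_, ha, hb⟩
      · apply PNat.coe_injective
        show ((((n0 : ℕ) : ℤ) + Fz f).toNat.toPNat' : ℕ) = (m : ℕ)
        rw [hn0, sub_add_cancel, Int.toNat_natCast]
        have hm2 : 0 < (m : ℕ) := m.2
        simp [Nat.toPNat']
        omega
  refine ⟨restrId _, restrId_InIN hSc, restrId_idem _, ?_⟩
  funext n
  rcases hf0 : f n with - | a <;> rcases hg0 : g n with - | b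
  · simp [pmul, hf0, hg0]
  · have hbS : b ∉ {m : ℕ+ | ∃ n, f n = some m ∧ g n = some m} := by
      rintro ⟨n', hfn', hgn'⟩
      obtain rfl := hg.1 hgn' hg0
      rw [hf0] at hfn'
      cases hfn'
    have hbS' : ¬∃ n', f n' = some b ∧ g n' = some b := hbS
    simp only [pmul, hf0, hg0, Option.bind_none, Option.bind_some, restrId]
    rw [if_neg hbS]
  · have haS : a ∉ {m : ℕ+ | ∃ n, f n = some m ∧ g n = some m} := by
      rintro ⟨n', hfn', hgn'⟩
      obtain rfl := hf.1 hfn' hf0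
      rw [hg0] at hgn'
      cases hgn'
    have haS' : ¬∃ n', f n' = some a ∧ g n' = some a := haS
    simp only [pmul, hf0, hg0, Option.bind_none, Option.bind_some, restrId]
    rw [if_neg haS]
  · obtain rfl := hagree n a b hf0 hg0
    simp [pmul, hf0, hg0]

/-- The map `𝔉 : 𝐈ℕ∞ → ℤ` sending `α` to the unique integer `z_α` with
`α(n) = n + z_α` on `dom α` is a surjective homomorphism onto the additive group `(ℤ, +)`
and `𝔉(α) = 𝔉(β)` iff `α 𝔠_mg β`; consequently the quotient `𝐈ℕ∞/𝔠_mg` of `𝐈ℕ∞` by its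
least group congruence is isomorphic to the additive group of integers. -/
theorem stmt13 :
    ∃ F : PMapN → ℤ,
      (∀ f, InIN f → ∀ n a, f n = some a → ((a : ℕ) : ℤ) = ((n : ℕ) : ℤ) + F f) ∧
      (∀ f g, InIN f → InIN g → F (pmul f g) = F f + F g) ∧
      (∀ z : ℤ, ∃ f, InIN f ∧ F f = z) ∧
      (∀ f g, InIN f → InIN g → (F f = F g ↔ Cmg f g)) := by
  refine ⟨Fz, ?_, ?_, ?_, ?_⟩
  · intro f hf n a hna
    have := Fz_spec hf hna
    linarith
  · intro f g hf hg
    exact Fz_mul hf hg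
  · intro z
    exact ⟨shiftZ z, shiftZ_InIN z, shiftZ_Fz z⟩
  · intro f g hf hg
    constructor
    · exact cmg_of_eq hf hg
    · rintro ⟨e, he, hee, heq⟩
      obtain ⟨n, a, hna⟩ := exists_dom he.2.1
      have haa : e a = some a := by
        have h := congrFun hee n
        rw [pmul, hna] at h
        simpa [hna] using h
      have hFe : Fz e = 0 := by
        rw [Fz_spec he haa]
        ring
      have h1 : Fz (pmul e f) = Fz (pmul e g) := by rw [heq]
      rw [Fz_mul he hf, Fz_mul he hg, hFe] at h1
      linarith
end

section
/- The kernel of the homomorphism 𝔥 : 𝐈ℕ∞ → 𝒞_ℕ (sending each η to its restriction to the tail { n ∈ ℕ : n ≥ n_η^d }), i.e. the relation { (η, μ) : 𝔥(η) = 𝔥(μ) }, is a congruence on 𝐈ℕ∞ that is not a group congruence. -/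
/-- The partial translation `α₀ : n ↦ n + 1` with domain ℕ. -/
def alpha0 : PMapN := fun n => some (n + 1)

/-- The partial translation `β₀ : n ↦ n - 1` with domain `ℕ \ {1}`. -/
def beta0 : PMapN := fun n => if n = 1 then none else some (n - 1)

/-- Membership in the submonoid `𝒞_ℕ` of `𝐈ℕ∞` generated by `α₀` and `β₀`
(isomorphic to the bicyclic monoid). -/
inductive InC : PMapN → Prop
  | one : InC pid
  | base_a : InC alpha0
  | base_b : InC beta0
  | mul : ∀ f g, InC f → InC g → InC (pmul f g)

/-- The retraction `𝔥 : 𝐈ℕ∞ → 𝒞_ℕ` sending `η` to its restriction to the tail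
`{n : n ≥ n_η^d}`, where `n_η^d` is the least number such that every `n ≥ n_η^d`
lies in `dom η`. -/
noncomputable def hmap (η : PMapN) : PMapN := fun n =>
  if sInf {N : ℕ | ∀ m : ℕ+, N ≤ (m : ℕ) → η m ≠ none} ≤ (n : ℕ) then η n else none

/-- A congruence on the semigroup `𝐈ℕ∞`: an equivalence relation on its elements that is
compatible with multiplication on the left and on the right. -/
def IsCongr (r : PMapN → PMapN → Prop) : Prop :=
  (∀ f, InIN f → r f f) ∧
  (∀ f g, InIN f → InIN g → r f g → r g f) ∧
  (∀ f g h, InIN f → InIN g → InIN h → r f g → r g h → r f h) ∧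
  (∀ f g c, InIN f → InIN g → InIN c → r f g →
      r (pmul c f) (pmul c g) ∧ r (pmul f c) (pmul g c))

/-- A group congruence on `𝐈ℕ∞`: a congruence whose quotient semigroup is a group,
i.e. there is a group `G` and a multiplicative map `φ` of `𝐈ℕ∞` onto `G` whose kernel is
exactly the congruence. -/
def IsGroupCongr (r : PMapN → PMapN → Prop) : Prop :=
  IsCongr r ∧
  ∃ (G : Type) (_ : Group G) (φ : PMapN → G),
    (∀ f g, InIN f → InIN g → φ (pmul f g) = φ f * φ g) ∧
    (∀ x : G, ∃ f, InIN f ∧ φ f = x) ∧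
    (∀ f g, InIN f → InIN g → (r f g ↔ φ f = φ g))


/-- The set of tail thresholds of `f`. -/
def tset (f : PMapN) : Set ℕ := {N : ℕ | ∀ m : ℕ+, N ≤ (m : ℕ) → f m ≠ none}

lemma hmap_eq (f : PMapN) (n : ℕ+) :
    hmap f n = if sInf (tset f) ≤ (n : ℕ) then f n else none := rfl

lemma tset_nonempty {f : PMapN} (h : {m : ℕ+ | f m = none}.Finite) :
    (tset f).Nonempty := by
  obtain ⟨B, hB⟩ := h.bddAbove
  refine ⟨(B : ℕ) + 1, fun m hm hnone => ?_⟩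
  have := hB (show m ∈ {m : ℕ+ | f m = none} from hnone)
  have : (m : ℕ) ≤ (B : ℕ) := this
  omega

lemma holes_finite {f : PMapN} (hf : InIN f) : {m : ℕ+ | f m = none}.Finite := by
  have : {m : ℕ+ | f m = none} = (pdom f)ᶜ := by
    ext m; simp [pdom]
  rw [this]; exact hf.2.1

lemma tail_def {f : PMapN} (hf : InIN f) :
    ∀ m : ℕ+, sInf (tset f) ≤ (m : ℕ) → f m ≠ none := by
  have := Nat.sInf_mem (tset_nonempty (holes_finite hf))
  exact this

/-- Key consequence of `hmap f = hmap g`. -/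
lemma key_s16 {f g : PMapN} (hf : InIN f) (h : hmap f = hmap g) :
    ∀ n : ℕ+, sInf (tset f) ≤ (n : ℕ) → sInf (tset g) ≤ (n : ℕ) ∧ f n = g n := by
  intro n hn
  have hfn : f n ≠ none := tail_def hf n hn
  have he := congrFun h n
  rw [hmap_eq, hmap_eq, if_pos hn] at he
  by_cases hg : sInf (tset g) ≤ (n : ℕ)
  · rw [if_pos hg] at he; exact ⟨hg, he⟩
  · rw [if_neg hg] at he; exact absurd he hfn

/-- Finiteness of holes of a composition (apply `g` first, then `f`). -/
lemma holes_comp_finite {f g : PMapN} (hf : InIN f) (hg : InIN g) :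
    {m : ℕ+ | pmul f g m = none}.Finite := by
  have hsub : {m : ℕ+ | pmul f g m = none} ⊆
      {m : ℕ+ | g m = none} ∪ ⋃ a ∈ {a : ℕ+ | f a = none}, {m : ℕ+ | g m = some a} := by
    intro m hm
    simp only [pmul, Set.mem_setOf_eq] at hm
    rcases hgm : g m with _ | a
    · exact Or.inl hgm
    · rw [hgm] at hm
      simp only [Option.bind_some] at hm
      right
      simp only [Set.mem_iUnion, Set.mem_setOf_eq]
      exact ⟨a, hm, hgm⟩
  refine Set.Finite.subset (Set.Finite.union (holes_finite hg) ?_) hsub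
  refine Set.Finite.biUnion (holes_finite hf) ?_
  intro a _
  apply Set.Subsingleton.finite
  intro x hx y hy
  exact hg.1 hx hy

/-- Every element of `𝐈ℕ∞` is a translation `n ↦ n + k` on its domain. -/
lemma translation {c : PMapN} (hc : InIN c) :
    ∃ k : ℤ, ∀ m a : ℕ+, c m = some a → ((a : ℕ) : ℤ) = ((m : ℕ) : ℤ) + k := by
  obtain ⟨N, hN⟩ := tset_nonempty (holes_finite hc)
  set p : ℕ+ := ⟨N + 1, by omega⟩ with hp
  have hpv : (p : ℕ) = N + 1 := rfl
  obtain ⟨q, hcp⟩ : ∃ q, c p = some q := by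
    rcases h : c p with _ | q
    · exact absurd h (hN p (by rw [hpv]; omega))
    · exact ⟨q, rfl⟩
  refine ⟨((q : ℕ) : ℤ) - ((p : ℕ) : ℤ), ?_⟩
  intro m a hma
  set B : ℕ := N + 1 + ((p : ℕ) + (q : ℕ)) + ((m : ℕ) + (a : ℕ) + (p : ℕ) + (q : ℕ)) with hB
  set Q : ℕ+ := ⟨B, by omega⟩ with hQ
  have hQv : (Q : ℕ) = B := rfl
  obtain ⟨b, hcQ⟩ : ∃ b, c Q = some b := by
    rcases h : c Q with _ | b
    · exact absurd h (hN Q (by rw [hQv]; omega))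
    · exact ⟨b, rfl⟩
  have h1 := hc.2.2.2 hcQ hcp
  have h2 := hc.2.2.2 hma hcQ
  have e1 := abs_eq_abs.mp h1
  have e2 := abs_eq_abs.mp h2
  have hb1 : 1 ≤ (b : ℕ) := b.one_le
  have ha1 : 1 ≤ (a : ℕ) := a.one_le
  have hq1 : 1 ≤ (q : ℕ) := q.one_le
  rcases e1 with e1 | e1 <;> rcases e2 with e2 | e2 <;> omega

lemma mem_tset_fst {f c : PMapN} {N : ℕ} (hN : N ∈ tset (pmul c f)) : N ∈ tset f := by
  intro m hm hfm
  exact hN m hm (by simp [pmul, hfm])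

lemma left_compat {f g c : PMapN} (hf : InIN f) (hg : InIN g) (hc : InIN c)
    (h : hmap f = hmap g) : hmap (pmul c f) = hmap (pmul c g) := by
  have hsub : ∀ {f' g' : PMapN}, InIN f' → hmap f' = hmap g' →
      tset (pmul c f') ⊆ tset (pmul c g') := by
    intro f' g' hf' h' N hN m hm hnone
    have hNf : N ∈ tset f' := mem_tset_fst hN
    have hfg := (key_s16 hf' h' m (le_trans (Nat.sInf_le hNf) hm)).2
    exact hN m hm (by simpa [pmul, hfg] using hnone)
  have hseq : tset (pmul c f) = tset (pmul c g) :=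
    le_antisymm (hsub hf h) (hsub hg h.symm)
  funext n
  rw [hmap_eq, hmap_eq, hseq]
  by_cases hn : sInf (tset (pmul c g)) ≤ (n : ℕ)
  · rw [if_pos hn, if_pos hn]
    have hmem : sInf (tset (pmul c f)) ∈ tset (pmul c f) :=
      Nat.sInf_mem (tset_nonempty (holes_comp_finite hc hf))
    have hn' : sInf (tset (pmul c f)) ≤ (n : ℕ) := by rw [hseq]; exact hn
    have hfn : sInf (tset f) ≤ (n : ℕ) :=
      le_trans (Nat.sInf_le (mem_tset_fst hmem)) hn'
    have := (key_s16 hf h n hfn).2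
    simp [pmul, this]
  · rw [if_neg hn, if_neg hn]

lemma tail_hits_high {f c : PMapN} (hf : InIN f) {k : ℤ}
    (hk : ∀ m a : ℕ+, c m = some a → ((a : ℕ) : ℤ) = ((m : ℕ) : ℤ) + k)
    {N : ℕ} (hN : N ∈ tset (pmul f c)) :
    ∀ m : ℕ+, N ≤ (m : ℕ) → ∀ a : ℕ+, c m = some a → sInf (tset f) ≤ (a : ℕ) := by
  by_contra hcon
  push_neg at hcon
  obtain ⟨m, hm, a, hca, hlt⟩ := hcon
  set Nf := sInf (tset f) with hNfdef
  have ha1 : 1 ≤ (a : ℕ) := a.one_le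
  have hnm : Nf - 1 ∉ tset f := Nat.notMem_of_lt_sInf (by omega)
  simp only [tset, Set.mem_setOf_eq] at hnm
  push_neg at hnm
  obtain ⟨m', hm'1, hm'2⟩ := hnm
  have hm'v : (m' : ℕ) = Nf - 1 := by
    have hh : ¬ (Nf ≤ (m' : ℕ)) := fun hh => (tail_def hf m' hh) hm'2
    omega
  have hm1pos : 0 < (m : ℕ) + (Nf - 1 - (a : ℕ)) := by have := m.pos; omega
  set m1 : ℕ+ := ⟨(m : ℕ) + (Nf - 1 - (a : ℕ)), hm1pos⟩ with hm1def
  have hm1v : (m1 : ℕ) = (m : ℕ) + (Nf - 1 - (a : ℕ)) := rfl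
  have hcomp : pmul f c m1 ≠ none := hN m1 (by omega)
  rcases hc1 : c m1 with _ | a1
  · exact hcomp (by simp [pmul, hc1])
  · have h1 := hk m a hca
    have h2 := hk m1 a1 hc1
    have ha1v : (a1 : ℕ) = (m' : ℕ) := by omega
    have hA : a1 = m' := PNat.coe_injective ha1v
    rw [hA] at hc1
    exact hcomp (by simp [pmul, hc1, hm'2])

lemma right_compat {f g c : PMapN} (hf : InIN f) (hg : InIN g) (hc : InIN c)
    (h : hmap f = hmap g) : hmap (pmul f c) = hmap (pmul g c) := by
  obtain ⟨k, hk⟩ := translation hc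
  have hsub : ∀ {f' g' : PMapN}, InIN f' → hmap f' = hmap g' →
      tset (pmul f' c) ⊆ tset (pmul g' c) := by
    intro f' g' hf' h' N hN m hm hnone
    have hfc : pmul f' c m ≠ none := hN m hm
    rcases hca : c m with _ | a
    · exact hfc (by simp [pmul, hca])
    · have hfa : f' a ≠ none := by
        intro hz; exact hfc (by simp [pmul, hca, hz])
      have hhi : sInf (tset f') ≤ (a : ℕ) := tail_hits_high hf' hk hN m hm a hca
      have hfg := (key_s16 hf' h' a hhi).2
      simp only [pmul, hca, Option.bind_some] at hnone
      rw [hfg] at hfa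
      exact hfa hnone
  have hseq : tset (pmul f c) = tset (pmul g c) :=
    le_antisymm (hsub hf h) (hsub hg h.symm)
  funext n
  rw [hmap_eq, hmap_eq, hseq]
  by_cases hn : sInf (tset (pmul g c)) ≤ (n : ℕ)
  · rw [if_pos hn, if_pos hn]
    have hmem : sInf (tset (pmul f c)) ∈ tset (pmul f c) :=
      Nat.sInf_mem (tset_nonempty (holes_comp_finite hf hc))
    have hn' : sInf (tset (pmul f c)) ≤ (n : ℕ) := by rw [hseq]; exact hn
    rcases hca : c n with _ | a
    · simp [pmul, hca]
    · have hhi : sInf (tset f) ≤ (a : ℕ) := tail_hits_high hf hk hmem n hn' a hca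
      have hfg := (key_s16 hf h a hhi).2
      simp [pmul, hca, hfg]
  · rw [if_neg hn, if_neg hn]

lemma pnat_ne_one_iff {m : ℕ+} : m ≠ 1 ↔ 2 ≤ (m : ℕ) := by
  have h1 : ((1 : ℕ+) : ℕ) = 1 := rfl
  have h2 : 1 ≤ (m : ℕ) := m.one_le
  constructor
  · intro h
    by_contra h3
    exact h (PNat.coe_injective (by omega))
  · intro h3 heq
    rw [heq, h1] at h3
    omega

lemma pnat_sub_one_coe {m : ℕ+} (h : m ≠ 1) : ((m - 1 : ℕ+) : ℕ) = (m : ℕ) - 1 := by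
  have h2 : 1 < m := lt_of_le_of_ne m.one_le (Ne.symm h)
  rw [PNat.sub_coe, if_pos h2, PNat.one_coe]

lemma pnat_sub_add {m : ℕ+} (h : m ≠ 1) : (m - 1) + 1 = m := by
  apply PNat.coe_injective
  rw [PNat.add_coe, pnat_sub_one_coe h, PNat.one_coe]
  have := pnat_ne_one_iff.mp h
  omega

lemma pnat_succ_ne_one (n : ℕ+) : n + 1 ≠ 1 := by
  rw [pnat_ne_one_iff, PNat.add_coe, PNat.one_coe]
  have : 1 ≤ (n : ℕ) := n.one_le
  omega

lemma pnat_succ_sub_one (n : ℕ+) : (n + 1) - 1 = n := by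
  apply PNat.coe_injective
  rw [pnat_sub_one_coe (pnat_succ_ne_one n), PNat.add_coe, PNat.one_coe]
  omega

lemma inIN_pid : InIN pid := by
  refine ⟨?_, ?_, ?_, ?_⟩
  · intro m n a h1 h2
    simp [pid] at h1 h2
    rw [h1, h2]
  · convert Set.finite_empty
    ext m; simp [pdom, pid]
  · convert Set.finite_empty
    ext m; simp [pran, pid]
  · intro m n a b h1 h2
    simp [pid] at h1 h2
    rw [h1, h2]

lemma inIN_alpha0 : InIN alpha0 := by
  refine ⟨?_, ?_, ?_, ?_⟩
  · intro m n a h1 h2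
    simp [alpha0] at h1 h2
    rw [← h1] at h2
    exact add_right_cancel h2.symm
  · convert Set.finite_empty
    ext m; simp [pdom, alpha0]
  · apply Set.Finite.subset (Set.finite_singleton 1)
    intro m hm
    simp only [pran, alpha0, Set.mem_compl_iff, Set.mem_setOf_eq, not_exists] at hm
    by_contra h1
    exact hm (m - 1) (by rw [Option.some_inj, pnat_sub_add h1])
  · intro m n a b h1 h2
    simp [alpha0] at h1 h2
    have e1 : (a : ℕ) = (m : ℕ) + 1 := by rw [← h1, PNat.add_coe, PNat.one_coe]
    have e2 : (b : ℕ) = (n : ℕ) + 1 := by rw [← h2, PNat.add_coe, PNat.one_coe]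
    have : ((a : ℕ) : ℤ) - ((b : ℕ) : ℤ) = ((m : ℕ) : ℤ) - ((n : ℕ) : ℤ) := by omega
    rw [this]

lemma inIN_beta0 : InIN beta0 := by
  refine ⟨?_, ?_, ?_, ?_⟩
  · intro m n a h1 h2
    simp only [beta0] at h1 h2
    split at h1
    · exact absurd h1 (by simp)
    · split at h2
      · exact absurd h2 (by simp)
      · rename_i hm hn
        rw [Option.some_inj] at h1 h2
        apply PNat.coe_injective
        have e1 := pnat_sub_one_coe hm
        have e2 := pnat_sub_one_coe hn
        have g1 := pnat_ne_one_iff.mp hm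
        have g2 := pnat_ne_one_iff.mp hn
        have : ((m - 1 : ℕ+) : ℕ) = ((n - 1 : ℕ+) : ℕ) := by rw [h1, h2]
        omega
  · apply Set.Finite.subset (Set.finite_singleton 1)
    intro m hm
    simp only [pdom, beta0, Set.mem_compl_iff, Set.mem_setOf_eq, not_not] at hm
    split at hm
    · rename_i h; exact h
    · exact absurd hm (by simp)
  · convert Set.finite_empty
    ext m
    simp only [pran, beta0, Set.mem_compl_iff, Set.mem_setOf_eq, not_exists,
      Set.mem_empty_iff_false, iff_false, not_forall, not_not]
    refine ⟨m + 1, ?_⟩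
    rw [if_neg (pnat_succ_ne_one m), Option.some_inj, pnat_succ_sub_one]
  · intro m n a b h1 h2
    simp only [beta0] at h1 h2
    split at h1
    · exact absurd h1 (by simp)
    · split at h2
      · exact absurd h2 (by simp)
      · rename_i hm hn
        rw [Option.some_inj] at h1 h2
        have e1 : (a : ℕ) = (m : ℕ) - 1 := by rw [← h1, pnat_sub_one_coe hm]
        have e2 : (b : ℕ) = (n : ℕ) - 1 := by rw [← h2, pnat_sub_one_coe hn]
        have g1 := pnat_ne_one_iff.mp hm
        have g2 := pnat_ne_one_iff.mp hn
        have : ((a : ℕ) : ℤ) - ((b : ℕ) : ℤ) = ((m : ℕ) : ℤ) - ((n : ℕ) : ℤ) := by omega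
        rw [this]

lemma ab_eq : pmul alpha0 beta0 = fun n => if n = 1 then none else some n := by
  funext n
  simp only [pmul, beta0, alpha0]
  split
  · rfl
  · rename_i h
    simp only [Option.bind_some, alpha0, Option.some_inj]
    exact pnat_sub_add h

lemma ba_eq : pmul beta0 alpha0 = pid := by
  funext n
  simp only [pmul, alpha0, beta0, pid, Option.bind_some]
  rw [if_neg (pnat_succ_ne_one n), Option.some_inj, pnat_succ_sub_one]

lemma inIN_ab : InIN (pmul alpha0 beta0) := by
  rw [ab_eq]
  refine ⟨?_, ?_, ?_, ?_⟩
  · intro m n a h1 h2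
    dsimp only at h1 h2
    split at h1
    · exact absurd h1 (by simp)
    · split at h2
      · exact absurd h2 (by simp)
      · rw [Option.some_inj] at h1 h2
        rw [h1, h2]
  · apply Set.Finite.subset (Set.finite_singleton 1)
    intro m hm
    simp only [pdom, Set.mem_compl_iff, Set.mem_setOf_eq, not_not] at hm
    split at hm
    · rename_i h; exact h
    · exact absurd hm (by simp)
  · apply Set.Finite.subset (Set.finite_singleton 1)
    intro m hm
    simp only [pran, Set.mem_compl_iff, Set.mem_setOf_eq, not_exists] at hm
    by_contra h1
    have h2 : m ≠ 1 := by simpa using h1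
    exact hm m (by rw [if_neg h2])
  · intro m n a b h1 h2
    dsimp only at h1 h2
    split at h1
    · exact absurd h1 (by simp)
    · split at h2
      · exact absurd h2 (by simp)
      · rw [Option.some_inj] at h1 h2
        rw [h1, h2]

lemma hmap_pid_eq : hmap pid = pid := by
  funext n
  have h0 : sInf (tset pid) ≤ (n : ℕ) :=
    le_trans (Nat.sInf_le (show (0 : ℕ) ∈ tset pid from fun m _ => by simp [pid]))
      (Nat.zero_le _)
  rw [hmap_eq, if_pos h0]

lemma hmap_ab_one : hmap (pmul alpha0 beta0) 1 = none := by
  rw [hmap_eq, if_neg]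
  intro hle
  have hne : (tset (pmul alpha0 beta0)).Nonempty := by
    refine ⟨2, fun m hm => ?_⟩
    rw [ab_eq]
    have : m ≠ 1 := pnat_ne_one_iff.mpr hm
    simp [this]
  have hmem := Nat.sInf_mem hne
  have := hmem 1 hle
  rw [ab_eq] at this
  simp at this

/-- The kernel `{(η, μ) : 𝔥(η) = 𝔥(μ)}` of the retraction
`𝔥 : 𝐈ℕ∞ → 𝒞_ℕ` (sending `η` to its restriction to the tail `{n : n ≥ n_η^d}`) is a
congruence on `𝐈ℕ∞` which is not a group congruence. -/
theorem stmt16 :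
    IsCongr (fun η μ => hmap η = hmap μ) ∧
    ¬ IsGroupCongr (fun η μ => hmap η = hmap μ) := by
  constructor
  · exact ⟨fun f _ => rfl, fun f g _ _ h => h.symm,
      fun f g h _ _ _ h1 h2 => h1.trans h2,
      fun f g c hf hg hc h => ⟨left_compat hf hg hc h, right_compat hf hg hc h⟩⟩
  · rintro ⟨-, G, _, φ, hmul, hsurj, hker⟩
    have e1 : pmul pid pid = pid := rfl
    have h1 : φ pid = 1 := by
      have h := hmul pid pid inIN_pid inIN_pid
      rw [e1] at h
      exact right_eq_mul.mp h
    have h2 : φ beta0 * φ alpha0 = 1 := by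
      rw [← hmul _ _ inIN_beta0 inIN_alpha0, ba_eq, h1]
    have h3 : φ alpha0 * φ beta0 = 1 := by
      have hb : φ beta0 = (φ alpha0)⁻¹ := eq_inv_of_mul_eq_one_left h2
      rw [hb, mul_inv_cancel]
    have h4 : φ (pmul alpha0 beta0) = φ pid := by
      rw [hmul _ _ inIN_alpha0 inIN_beta0, h3, h1]
    have h5 : hmap (pmul alpha0 beta0) = hmap pid :=
      (hker _ _ inIN_ab inIN_pid).mpr h4
    have c2 := hmap_ab_one
    rw [h5, hmap_pid_eq] at c2
    exact absurd c2 (by simp [pid])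
end

section
/- For an element ξ of the monoid 𝐈ℕ∞ the following are equivalent: (1) ξ ∈ 𝒞_ℕ; (2) dom ξ is a tail of ℕ, i.e. dom ξ = { n ∈ ℕ : n ≥ min(dom ξ) }; (3) ran ξ is a tail of ℕ, i.e. ran ξ = { n ∈ ℕ : n ≥ min(ran ξ) }. -/
/-- `A` is a tail of ℕ: `A = {n : n ≥ k}` for some positive integer `k`
(equivalently, `A = {n : n ≥ min A}`). -/
def IsTail (A : Set ℕ+) : Prop := ∃ k : ℕ+, A = {n : ℕ+ | k ≤ n}

-- auxiliary lemmas
def gamma (a b : ℕ) : PMapN := fun n =>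
  if h : b < (n : ℕ) then some (⟨(n:ℕ) + a - b, by omega⟩ : ℕ+) else none

lemma pid_eq : pid = gamma 0 0 := by
  funext n
  simp only [pid, gamma, dif_pos n.pos]
  congr 1

lemma alpha0_eq : alpha0 = gamma 1 0 := by
  funext n
  simp only [alpha0, gamma, dif_pos n.pos]
  congr 1

lemma beta0_eq : beta0 = gamma 0 1 := by
  funext n
  simp only [beta0, gamma]
  by_cases h : n = 1
  · rw [if_pos h, dif_neg (by simp [h])]
  · have h2 : 1 < (n:ℕ) := by
      have := n.pos
      have : (n:ℕ) ≠ 1 := fun hc => h (PNat.coe_eq_one_iff.mp hc)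
      omega
    rw [if_neg h, dif_pos h2]
    have h3 : (1:ℕ+) < n := by exact_mod_cast h2
    exact congrArg some (PNat.coe_injective (by
      rw [PNat.sub_coe, if_pos h3]
      simp only [PNat.mk_coe, PNat.one_coe]
      omega))

lemma gamma_mul (a b a' b' : ℕ) :
    pmul (gamma a b) (gamma a' b') = gamma (a + a' - min b a') (b + b' - min b a') := by
  funext n
  simp only [pmul, gamma]
  by_cases h1 : b' < (n:ℕ)
  · rw [dif_pos h1]
    refine (Option.bind_some _ _).trans ?_
    simp only [gamma, PNat.mk_coe]
    by_cases h2 : b < (n:ℕ) + a' - b'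
    · refine (dif_pos h2).trans (Eq.trans ?_ (dif_pos (show b + b' - min b a' < (n:ℕ) by omega)).symm)
      congr 1
      exact PNat.eq (by show (n:ℕ) + a' - b' + a - b = _; simp only [PNat.mk_coe]; omega)
    · refine (dif_neg h2).trans (Eq.trans ?_ (dif_neg (show ¬ (b + b' - min b a' < (n:ℕ)) by omega)).symm)
      rfl
  · rw [dif_neg h1, dif_neg (show ¬ (b + b' - min b a' < (n:ℕ)) by omega), Option.bind_none]

lemma InC_gamma (a b : ℕ) : InC (gamma a b) := by
  have ha : ∀ a : ℕ, InC (gamma a 0) := by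
    intro a
    induction a with
    | zero => rw [← pid_eq]; exact InC.one
    | succ a ih =>
        have : gamma (a+1) 0 = pmul (gamma 1 0) (gamma a 0) := by
          rw [gamma_mul]; norm_num [Nat.add_comm]
        rw [this, ← alpha0_eq]
        exact InC.mul _ _ InC.base_a ih
  have hb : ∀ b : ℕ, InC (gamma 0 b) := by
    intro b
    induction b with
    | zero => rw [← pid_eq]; exact InC.one
    | succ b ih =>
        have : gamma 0 (b+1) = pmul (gamma 0 b) (gamma 0 1) := by
          rw [gamma_mul]; norm_num
        rw [this, ← beta0_eq] at *
        exact InC.mul _ _ ih InC.base_b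
  have : gamma a b = pmul (gamma a 0) (gamma 0 b) := by
    rw [gamma_mul]; norm_num
  rw [this]
  exact InC.mul _ _ (ha a) (hb b)

lemma InC_iff_gamma (ξ : PMapN) : InC ξ ↔ ∃ a b, ξ = gamma a b := by
  constructor
  · intro h
    induction h with
    | one => exact ⟨0, 0, pid_eq⟩
    | base_a => exact ⟨1, 0, alpha0_eq⟩
    | base_b => exact ⟨0, 1, beta0_eq⟩
    | mul f g _ _ ihf ihg =>
        obtain ⟨a, b, rfl⟩ := ihf
        obtain ⟨a', b', rfl⟩ := ihg
        exact ⟨_, _, gamma_mul a b a' b'⟩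
  · rintro ⟨a, b, rfl⟩
    exact InC_gamma a b

lemma pdom_gamma (a b : ℕ) : pdom (gamma a b) = {n : ℕ+ | b < (n:ℕ)} := by
  ext n
  simp only [pdom, gamma, Set.mem_setOf_eq]
  by_cases h : b < (n:ℕ) <;> simp [h]

lemma pran_gamma (a b : ℕ) : pran (gamma a b) = {m : ℕ+ | a < (m:ℕ)} := by
  ext m
  simp only [pran, gamma, Set.mem_setOf_eq]
  constructor
  · rintro ⟨n, hn⟩
    by_cases h : b < (n:ℕ)
    · rw [dif_pos h] at hn
      have := congrArg (fun o => Option.map (fun x : ℕ+ => (x:ℕ)) o) hn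
      simp only [Option.map_some] at this
      have : (n:ℕ) + a - b = (m:ℕ) := congrArg Subtype.val (Option.some.inj hn)
      omega
    · rw [dif_neg h] at hn; exact absurd hn (by simp)
  · intro h
    refine ⟨(⟨(m:ℕ) + b - a, by omega⟩ : ℕ+), ?_⟩
    simp only [gamma, PNat.mk_coe]
    refine (dif_pos (show b < (m:ℕ) + b - a by omega)).trans ?_
    exact congrArg some (PNat.coe_injective (by simp only [PNat.mk_coe]; omega))

lemma isTail_gt (t : ℕ) : IsTail {n : ℕ+ | t < (n:ℕ)} := by
  refine ⟨⟨t+1, Nat.succ_pos t⟩, ?_⟩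
  ext n
  simp only [Set.mem_setOf_eq, ← PNat.coe_le_coe, PNat.mk_coe]
  change _ ↔ t + 1 ≤ (n:ℕ)
  omega

lemma dom_infinite_s18 {ξ : PMapN} (hξ : InIN ξ) : (pdom ξ).Infinite := by
  have := hξ.2.1.infinite_compl
  rwa [compl_compl] at this

lemma shift_exists {ξ : PMapN} (hξ : InIN ξ) :
    ∃ c : ℤ, ∀ ⦃n m : ℕ+⦄, ξ n = some m → ((m:ℕ):ℤ) = ((n:ℕ):ℤ) + c := by
  obtain ⟨n₀, hn₀⟩ := (dom_infinite_s18 hξ).nonempty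
  obtain ⟨m₀, hm₀⟩ := Option.ne_none_iff_exists'.mp hn₀
  refine ⟨((m₀:ℕ):ℤ) - ((n₀:ℕ):ℤ), ?_⟩
  intro n m hnm
  -- pick a large element of the domain
  obtain ⟨N, hNdom, hN⟩ := (dom_infinite_s18 hξ).exists_gt (m₀ + n₀ + m + n)
  obtain ⟨M, hM⟩ := Option.ne_none_iff_exists'.mp hNdom
  have hN' : (m₀:ℕ) + (n₀:ℕ) + (m:ℕ) + (n:ℕ) < (N:ℕ) := by exact_mod_cast hN
  have h1 := hξ.2.2.2 hM hm₀
  have h2 := hξ.2.2.2 hM hnm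
  have hM1 : 1 ≤ (M:ℕ) := M.pos
  rcases abs_eq_abs.mp h1 with h1' | h1' <;> rcases abs_eq_abs.mp h2 with h2' | h2' <;> omega

lemma eq_gamma_of_dom_tail {ξ : PMapN} (hξ : InIN ξ) (h : IsTail (pdom ξ)) :
    ∃ a b, ξ = gamma a b := by
  obtain ⟨c, hc⟩ := shift_exists hξ
  obtain ⟨k, hk⟩ := h
  have hkdom : k ∈ pdom ξ := by rw [hk]; exact le_refl k
  obtain ⟨u, hu⟩ := Option.ne_none_iff_exists'.mp hkdom
  have hcu := hc hu
  refine ⟨(u:ℕ) - 1, (k:ℕ) - 1, ?_⟩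
  funext n
  by_cases hn : k ≤ n
  · have hndom : n ∈ pdom ξ := by rw [hk]; exact hn
    obtain ⟨m, hm⟩ := Option.ne_none_iff_exists'.mp hndom
    have hcm := hc hm
    have hkn : (k:ℕ) ≤ (n:ℕ) := hn
    rw [hm]
    simp only [gamma]
    rw [dif_pos (show (k:ℕ) - 1 < (n:ℕ) by have := k.pos; omega)]
    refine congrArg some (PNat.coe_injective ?_)
    simp only [PNat.mk_coe]
    have := u.pos; have := m.pos; have := k.pos
    omega
  · have hndom : n ∉ pdom ξ := by rw [hk]; exact hn
    have : ξ n = none := not_not.mp (fun hne => hndom hne)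
    rw [this]
    simp only [gamma]
    rw [dif_neg (show ¬ ((k:ℕ) - 1 < (n:ℕ)) by
      have hkn : ¬ ((k:ℕ) ≤ (n:ℕ)) := fun hle => hn (by exact_mod_cast hle)
      have := k.pos
      omega)]

lemma dom_tail_of_ran_tail {ξ : PMapN} (hξ : InIN ξ) (h : IsTail (pran ξ)) :
    IsTail (pdom ξ) := by
  obtain ⟨c, hc⟩ := shift_exists hξ
  obtain ⟨l, hl⟩ := h
  refine ⟨⟨(((l:ℕ):ℤ) - c).toNat ⊔ 1, by omega⟩, ?_⟩
  ext n
  simp only [Set.mem_setOf_eq, ← PNat.coe_le_coe, PNat.mk_coe]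
  change _ ↔ (((l:ℕ):ℤ) - c).toNat ⊔ 1 ≤ (n:ℕ)
  constructor
  · intro hn
    obtain ⟨m, hm⟩ := Option.ne_none_iff_exists'.mp hn
    have hcm := hc hm
    have hmr : m ∈ pran ξ := ⟨n, hm⟩
    rw [hl] at hmr
    have hlm : ((l:ℕ):ℤ) ≤ ((m:ℕ):ℤ) := by exact_mod_cast (hmr : l ≤ m)
    have := n.pos
    omega
  · intro hn
    have hge : ((l:ℕ):ℤ) ≤ ((n:ℕ):ℤ) + c := by omega
    have hpos : 0 < (((n:ℕ):ℤ) + c).toNat := by have := l.pos; omega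
    set m : ℕ+ := ⟨(((n:ℕ):ℤ) + c).toNat, hpos⟩ with hmdef
    have hmr : m ∈ pran ξ := by
      rw [hl]
      show l ≤ m
      rw [← PNat.coe_le_coe]
      simp only [hmdef, PNat.mk_coe]
      omega
    obtain ⟨n', hn'⟩ := hmr
    have hcn' := hc hn'
    have : n' = n := by
      apply PNat.coe_injective
      have hm : ((m:ℕ):ℤ) = ((n:ℕ):ℤ) + c := by simp only [hmdef, PNat.mk_coe]; omega
      omega
    rw [this] at hn'
    simp only [pdom, Set.mem_setOf_eq, hn']
    exact fun hcon => Option.some_ne_none _ hcon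

/-- For `ξ ∈ 𝐈ℕ∞` the following are equivalent:
(1) `ξ ∈ 𝒞_ℕ`; (2) `dom ξ` is a tail of ℕ; (3) `ran ξ` is a tail of ℕ. -/
theorem stmt18 (ξ : PMapN) (hξ : InIN ξ) :
    (InC ξ ↔ IsTail (pdom ξ)) ∧ (InC ξ ↔ IsTail (pran ξ)) := by
  have hdom : IsTail (pdom ξ) → InC ξ := fun h => by
    obtain ⟨a, b, rfl⟩ := eq_gamma_of_dom_tail hξ h
    exact InC_gamma a b
  constructor
  · constructor
    · intro h
      obtain ⟨a, b, rfl⟩ := (InC_iff_gamma _).mp h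
      rw [pdom_gamma]
      exact isTail_gt b
    · exact hdom
  · constructor
    · intro h
      obtain ⟨a, b, rfl⟩ := (InC_iff_gamma _).mp h
      rw [pran_gamma]
      exact isTail_gt a
    · exact fun h => hdom (dom_tail_of_ran_tail hξ h)
end
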